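/- Let S be a finite alphabet and P, Q : S → ℝ probability distributions with P(x) > 0 and Q(x) > 0 for all x. Define f(t) = D( (1−t)P + tQ ‖ Q ) for t ∈ [0, 1). Then f is differentiable at 0 with f'(0) = −( D(P‖Q) + D(Q‖P) ). (This yields the critical exponent γ₀(P,Q) = D(P‖Q)/(D(P‖Q)+D(Q‖P)) of the composition-class renormalization-group flow.) -/

import Mathlib

/-- Derivative of relative entropy along the linear flow toward `Q`:
for `f(t) = D((1-t)P + tQ ‖ Q)`, one has `f'(0) = -(D(P‖Q) + D(Q‖P))`. -/
theorem deriv_relEntropy_linear_flow (S : Type*) [Fintype S]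
    (P Q : S → ℝ) (hPpos : ∀ x, 0 < P x) (hQpos : ∀ x, 0 < Q x)
    (hPsum : ∑ x, P x = 1) (hQsum : ∑ x, Q x = 1)
    (f : ℝ → ℝ)
    (hf : ∀ t, f t = ∑ x, ((1 - t) * P x + t * Q x) *
      Real.log (((1 - t) * P x + t * Q x) / Q x)) :
    HasDerivAt f
      (-((∑ x, P x * Real.log (P x / Q x)) + (∑ x, Q x * Real.log (Q x / P x)))) 0 := by
  have hfun : f = fun t => ∑ x, ((1 - t) * P x + t * Q x) *
      Real.log (((1 - t) * P x + t * Q x) / Q x) := funext hf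
  have key : ∀ x : S, HasDerivAt
      (fun t : ℝ => ((1 - t) * P x + t * Q x) *
        Real.log (((1 - t) * P x + t * Q x) / Q x))
      ((Q x - P x) * Real.log (P x / Q x) + (Q x - P x)) 0 := by
    intro x
    have hu : HasDerivAt (fun t : ℝ => (1 - t) * P x + t * Q x) (Q x - P x) 0 := by
      have h1 : HasDerivAt (fun t : ℝ => (1 - t) * P x) (-P x) 0 := by
        simpa using (((hasDerivAt_id (0:ℝ)).const_sub 1).mul_const (P x))
      have h2 : HasDerivAt (fun t : ℝ => t * Q x) (Q x) 0 := by
        simpa using (hasDerivAt_id (0:ℝ)).mul_const (Q x)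
      exact (h1.add h2).congr_deriv (by ring)
    have hu0 : ((1 - (0:ℝ)) * P x + 0 * Q x) = P x := by ring
    have hudiv : HasDerivAt (fun t : ℝ => ((1 - t) * P x + t * Q x) / Q x)
        ((Q x - P x) / Q x) 0 := hu.div_const (Q x)
    have hne : ((1 - (0:ℝ)) * P x + 0 * Q x) / Q x ≠ 0 := by
      rw [hu0]; exact div_ne_zero (hPpos x).ne' (hQpos x).ne'
    have hlog := hudiv.log hne
    have hmul : HasDerivAt (fun t : ℝ => ((1 - t) * P x + t * Q x) *
        Real.log (((1 - t) * P x + t * Q x) / Q x)) _ 0 := hu.mul hlog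
    convert hmul using 1
    rw [hu0]
    have hP := (hPpos x).ne'
    have hQ := (hQpos x).ne'
    field_simp
  have hsum : HasDerivAt (fun t => ∑ x, ((1 - t) * P x + t * Q x) *
      Real.log (((1 - t) * P x + t * Q x) / Q x)) _ 0 := HasDerivAt.fun_sum (u := Finset.univ) (fun x _ => key x)
  rw [hfun]
  convert hsum using 1
  have hlogswap : ∀ x : S, Real.log (Q x / P x) = - Real.log (P x / Q x) := by
    intro x
    rw [← Real.log_inv, inv_div]
  simp only [hlogswap, Finset.sum_add_distrib, Finset.sum_sub_distrib, sub_mul,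
    Finset.mul_sum, mul_neg, Finset.sum_neg_distrib]
  rw [hPsum, hQsum]
  ring
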